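/- (Third-order tangency of the parabola used for tripling.) Let a₀, a₁, a₂, a₃, a₄, x₁, y₁ ∈ ℂ with y₁ ≠ 0, y₁² = f(x₁), where f(X) = a₄X⁴ + a₃X³ + a₂X² + a₁X + a₀, and let P(X) = -(X - x₁)²(4a₄x₁³ + 3a₃x₁² + 2a₂x₁ + a₁)²/(8y₁³) + (X - x₁)(X(6a₄x₁² + 3a₃x₁ + a₂) - 2a₄x₁³ + a₂x₁ + a₁)/(2y₁) + y₁. Then (X - x₁)³ divides the polynomial f(X) - P(X)² in ℂ[X]. -/

import Mathlib

open Polynomial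

/-- Third-order tangency of the parabola used for tripling: the quadratic
`P` below meets the quartic curve `y² = f(x)` at `(x₁,y₁)` with intersection
multiplicity at least three, i.e. `(X - x₁)³` divides `f(X) - P(X)²` in `ℂ[X]`. -/
theorem tripling_parabola_third_order_tangency
    (a0 a1 a2 a3 a4 x1 y1 : ℂ)
    (hy1 : y1 ≠ 0)
    (h1 : y1 ^ 2 = a4 * x1 ^ 4 + a3 * x1 ^ 3 + a2 * x1 ^ 2 + a1 * x1 + a0) :
    (X - C x1) ^ 3 ∣
      (C a4 * X ^ 4 + C a3 * X ^ 3 + C a2 * X ^ 2 + C a1 * X + C a0)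
        - (C (-(4 * a4 * x1 ^ 3 + 3 * a3 * x1 ^ 2 + 2 * a2 * x1 + a1) ^ 2
              / (8 * y1 ^ 3)) * (X - C x1) ^ 2
            + C (2 * y1)⁻¹ * (X - C x1)
              * (X * C (6 * a4 * x1 ^ 2 + 3 * a3 * x1 + a2)
                  + C (-2 * a4 * x1 ^ 3 + a2 * x1 + a1))
            + C y1) ^ 2 := by
  set p : ℂ[X] :=
      (C a4 * X ^ 4 + C a3 * X ^ 3 + C a2 * X ^ 2 + C a1 * X + C a0)
        - (C (-(4 * a4 * x1 ^ 3 + 3 * a3 * x1 ^ 2 + 2 * a2 * x1 + a1) ^ 2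
              / (8 * y1 ^ 3)) * (X - C x1) ^ 2
            + C (2 * y1)⁻¹ * (X - C x1)
              * (X * C (6 * a4 * x1 ^ 2 + 3 * a3 * x1 + a2)
                  + C (-2 * a4 * x1 ^ 3 + a2 * x1 + a1))
            + C y1) ^ 2 with hp
  by_cases hp0 : p = 0
  · exact hp0 ▸ dvd_zero _
  have hroot : ∀ m ≤ 2, (derivative^[m] p).IsRoot x1 := by
    intro m hm
    have hu : y1 * y1⁻¹ = 1 := mul_inv_cancel₀ hy1
    interval_cases m <;>
      simp only [Function.iterate_succ, Function.iterate_zero, Function.comp_apply, id_eq, hp,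
        derivative_sub, derivative_add, derivative_mul, derivative_pow, derivative_X,
        derivative_C, derivative_sub, derivative_X_pow, IsRoot, eval_add, eval_sub, eval_mul,
        eval_pow, eval_C, eval_X, eval_natCast, eval_zero, eval_one, derivative_zero,
        derivative_one] <;>
      push_cast <;>
      field_simp
    · linear_combination (-256 * y1 ^ 6) * h1
    · ring
    · ring
  have h3 : 2 < p.rootMultiplicity x1 := by
    apply Polynomial.lt_rootMultiplicity_of_isRoot_iterate_derivative_of_mem_nonZeroDivisors
      hp0 hroot
    exact mem_nonZeroDivisors_of_ne_zero (by norm_num)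
  exact dvd_trans (pow_dvd_pow _ h3) (p.pow_rootMultiplicity_dvd x1)
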